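/- Oscillation criterion (convergent case): with v, W, B, z as above and v^{-1} ∈ L¹(+∞), if for some R > 0 one has limsup_{t→∞} [∫_R^t W(s)v(s) ds · ∫_t^∞ ds/v(s)] > 1, then z is oscillatory. -/

import Mathlib

open Real Set Filter MeasureTheory intervalIntegral

private lemma limsup_le_helper14 {g : ℝ → ℝ} {a : ℝ} (ha : 0 ≤ a)
    (h : ∀ᶠ t in atTop, g t ≤ a) : Filter.limsup g atTop ≤ a := by
  rw [Filter.limsup_eq]
  by_cases hb : BddBelow {b | ∀ᶠ t in atTop, g t ≤ b}
  · exact csInf_le hb h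
  · rw [Real.sInf_of_not_bddBelow hb]; exact ha

set_option maxHeartbeats 2000000 in
/-- Oscillation criterion, convergent case `1/v ∈ L¹(+∞)`: if for some `R > 0`
`limsup_{t→∞} (∫_R^t W v) · (∫_t^∞ ds/v) > 1`, then `z` is oscillatory: it has a zero
beyond every `T > 0`. -/
theorem stmt14 (B : ℝ) (hB : 0 ≤ B) (v W z z' : ℝ → ℝ) (z₀ : ℝ)
    (hv0 : ∀ t ∈ Ici (0 : ℝ), 0 ≤ v t)
    (hvloc : ∀ r > (0 : ℝ), BddAbove (v '' Icc 0 r))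
    (hWloc : ∀ r > (0 : ℝ), BddAbove ((fun t => |W t|) '' Icc 0 r))
    (hvinvloc : ∀ a b : ℝ, 0 < a → a ≤ b → BddAbove ((fun t => 1 / v t) '' Icc a b))
    (hvnotL1zero : ¬ IntervalIntegrable (fun t => 1 / v t) MeasureTheory.volume 0 1)
    (hvL1inf : ∀ t > (0 : ℝ), MeasureTheory.IntegrableOn (fun s => 1 / v s) (Ioi t))
    (hvlim : Tendsto v (nhdsWithin 0 (Ioi 0)) (nhds 0))
    (hW : ∀ t ∈ Ioi (0 : ℝ), W t ≥ -B ^ 2 / (v t) ^ 2)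
    (hzlip : LocallyLipschitzOn (Ici 0) z)
    (hz' : ∀ t ∈ Ioi (0 : ℝ), HasDerivAt z (z' t) t)
    (heq : ∀ t ∈ Ioi (0 : ℝ), HasDerivAt (fun s => v s * z' s) (-(W t * v t * z t)) t)
    (hz'bdd : ∃ C δ : ℝ, 0 < δ ∧ ∀ t ∈ Ioo (0 : ℝ) δ, |z' t| ≤ C)
    (hz0 : Tendsto z (nhdsWithin 0 (Ioi 0)) (nhds z₀)) (hz₀pos : 0 < z₀)
    (R : ℝ) (hR : 0 < R)
    (hosc : 1 < Filter.limsup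
      (fun t => (∫ s in R..t, W s * v s) * ∫ s in Ioi t, 1 / v s) atTop) :
    ∀ T > (0 : ℝ), ∃ t > T, z t = 0 := by
  intro T hT0
  by_contra hcon
  push_neg at hcon
  -- opaque notation
  obtain ⟨A, hAdef⟩ : ∃ A : ℝ → ℝ, A = fun t => ∫ s in Ioi t, 1 / v s := ⟨_, rfl⟩
  rw [show (fun t => (∫ (s : ℝ) in R..t, W s * v s) * ∫ (s : ℝ) in Ioi t, 1 / v s)
      = (fun t => (∫ (s : ℝ) in R..t, W s * v s) * A t) from by rw [hAdef]] at hosc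
  -- nonnegativity of A
  have hAnn : ∀ t : ℝ, 0 ≤ t → 0 ≤ A t := by
    intro t ht
    simp only [hAdef]
    exact setIntegral_nonneg measurableSet_Ioi fun s hs =>
      one_div_nonneg.mpr (hv0 s (le_of_lt (lt_of_le_of_lt ht hs)))
  -- difference formula
  have hAsub : ∀ t₁ t₂ : ℝ, 0 < t₁ → t₁ ≤ t₂ → A t₁ - A t₂ = ∫ s in t₁..t₂, 1 / v s := by
    intro t₁ t₂ ht1 h12
    have h1 : IntegrableOn (fun s => 1 / v s) (Ioc t₁ t₂) volume :=
      (hvL1inf t₁ ht1).mono_set Ioc_subset_Ioi_self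
    have h2 : IntegrableOn (fun s => 1 / v s) (Ioi t₂) volume :=
      hvL1inf t₂ (lt_of_lt_of_le ht1 h12)
    have hsp : A t₁ = (∫ s in Ioc t₁ t₂, 1 / v s) + A t₂ := by
      simp only [hAdef]
      rw [← setIntegral_union (Ioc_disjoint_Ioi le_rfl) measurableSet_Ioi h1 h2,
        Ioc_union_Ioi_eq_Ioi h12]
    rw [intervalIntegral.integral_of_le h12]
    linarith
  have hAanti : ∀ t₁ t₂ : ℝ, 0 < t₁ → t₁ ≤ t₂ → A t₂ ≤ A t₁ := by
    intro t₁ t₂ ht1 h12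
    have := hAsub t₁ t₂ ht1 h12
    have hnn : 0 ≤ ∫ s in t₁..t₂, 1 / v s :=
      intervalIntegral.integral_nonneg h12 fun s hs =>
        one_div_nonneg.mpr (hv0 s (le_of_lt (lt_of_lt_of_le ht1 hs.1)))
    linarith
  -- interval integrability of 1/v
  have h1vInt : ∀ a b : ℝ, 0 < a → a ≤ b →
      IntervalIntegrable (fun s => 1 / v s) volume a b := by
    intro a b ha hab
    rw [intervalIntegrable_iff_integrableOn_Ioc_of_le hab]
    exact (hvL1inf a ha).mono_set Ioc_subset_Ioi_self
  -- A tends to 0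
  have hAtend : Tendsto A atTop (nhds 0) := by
    have h1 : Tendsto (fun t : ℝ => A 1 - ∫ s in (1:ℝ)..t, 1 / v s) atTop
        (nhds (A 1 - A 1)) := by
      have h2 := MeasureTheory.intervalIntegral_tendsto_integral_Ioi (μ := volume) 1
        (hvL1inf 1 one_pos) tendsto_id
      rw [hAdef]
      exact tendsto_const_nhds.sub h2
    rw [sub_self] at h1
    refine h1.congr' ?_
    filter_upwards [eventually_ge_atTop (1:ℝ)] with t ht
    have := hAsub 1 t one_pos ht
    linarith
  -- positivity of A, or else easy contradiction
  by_cases hApos : ∀ t : ℝ, 0 < t → 0 < A t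
  swap
  · push_neg at hApos
    obtain ⟨t₁, ht₁, hAt₁⟩ := hApos
    have hev : ∀ᶠ t in atTop, (∫ s in R..t, W s * v s) * A t ≤ 0 := by
      filter_upwards [eventually_ge_atTop (max t₁ 1)] with t ht
      have hzero : A t = 0 := le_antisymm
        (le_trans (hAanti t₁ t ht₁ (le_trans (le_max_left _ _) ht)) hAt₁)
        (hAnn t (le_trans (le_trans zero_le_one (le_max_right t₁ 1)) ht))
      rw [hzero, mul_zero]
    have := limsup_le_helper14 le_rfl hev
    linarith
  -- Riccati function
  obtain ⟨u, hudef⟩ : ∃ u : ℝ → ℝ, u = fun s => v s * z' s / z s := ⟨_, rfl⟩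
  obtain ⟨ueq, hueqdef⟩ : ∃ q : ℝ → ℝ, q = fun t => -(W t * v t) - (u t) ^ 2 / v t :=
    ⟨_, rfl⟩
  -- pointwise bound -(W v) ≤ B² / v
  have hvWv : ∀ t : ℝ, 0 < t → -(W t * v t) ≤ B ^ 2 / v t := by
    intro t ht
    rcases (hv0 t (le_of_lt ht)).eq_or_lt with hv | hv
    · rw [← hv]; simp
    · have h3 : (-B ^ 2 / (v t) ^ 2) * v t ≤ W t * v t :=
        mul_le_mul_of_nonneg_right (hW t ht) (le_of_lt hv)
      have h2 : (-B ^ 2 / (v t) ^ 2) * v t = -(B ^ 2 / v t) := by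
        field_simp
      linarith
  -- derivative of u
  have hud : ∀ t : ℝ, T < t → HasDerivAt u (ueq t) t := by
    intro t ht
    have ht0 : (0:ℝ) < t := hT0.trans ht
    have hz1 := hz' t (mem_Ioi.mpr ht0)
    have hp := heq t (mem_Ioi.mpr ht0)
    have hzne : z t ≠ 0 := hcon t ht
    have hdd := hp.div hz1 hzne
    simp only [hueqdef, hudef]
    convert hdd using 1 <;> try rfl
    rcases (hv0 t (le_of_lt ht0)).eq_or_lt with hv | hv
    · simp [← hv]
    · have hvne : v t ≠ 0 := ne_of_gt hv
      field_simp
      try ring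
  have hucont : ∀ t : ℝ, T < t → ContinuousAt u t := by
    intro t ht
    have ht0 : (0:ℝ) < t := hT0.trans ht
    rw [hudef]
    exact ((heq t (mem_Ioi.mpr ht0)).continuousAt.div
      (hz' t (mem_Ioi.mpr ht0)).continuousAt (hcon t ht))
  -- interval integrability of W v
  have hWvInt : ∀ a b : ℝ, T < a → a ≤ b →
      IntervalIntegrable (fun s => W s * v s) volume a b := by
    intro a b ha hab
    have ha0 : (0:ℝ) < a := hT0.trans ha
    have hb0 : (0:ℝ) < b := lt_of_lt_of_le ha0 hab
    rw [intervalIntegrable_iff_integrableOn_Ioc_of_le hab]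
    have hsub : ∀ s ∈ Ioc a b, T < s := fun s hs => ha.trans hs.1
    have hzc : ContinuousOn z (Ioc a b) := fun s hs =>
      ((hz' s (mem_Ioi.mpr (hT0.trans (hsub s hs)))).continuousAt).continuousWithinAt
    have hmeas : AEStronglyMeasurable (fun s => W s * v s) (volume.restrict (Ioc a b)) := by
      have hd : Measurable (deriv (fun x => v x * z' x)) := measurable_deriv _
      have hg : AEStronglyMeasurable
          (fun s => -(deriv (fun x => v x * z' x) s) * (z s)⁻¹)
          (volume.restrict (Ioc a b)) :=
        (hd.neg.aestronglyMeasurable).mul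
          ((hzc.inv₀ (fun s hs => hcon s (hsub s hs))).aestronglyMeasurable measurableSet_Ioc)
      refine hg.congr ?_
      rw [Filter.EventuallyEq, ae_restrict_iff' measurableSet_Ioc]
      refine Eventually.of_forall fun s hs => ?_
      have hder : deriv (fun x => v x * z' x) s = -(W s * v s * z s) :=
        (heq s (mem_Ioi.mpr (hT0.trans (hsub s hs)))).deriv
      rw [hder]
      field_simp [hcon s (hsub s hs)]
    obtain ⟨MW, hMW⟩ := hWloc b hb0
    obtain ⟨Mv, hMv⟩ := hvloc b hb0
    refine ⟨hmeas, HasFiniteIntegral.restrict_of_bounded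
      (C := max MW 0 * max Mv 0) measure_Ioc_lt_top ?_⟩
    rw [ae_restrict_iff' measurableSet_Ioc]
    refine Eventually.of_forall fun s hs => ?_
    have hs0 : (0:ℝ) ≤ s := le_of_lt (ha0.trans hs.1)
    have hsmem : s ∈ Icc (0:ℝ) b := ⟨hs0, hs.2⟩
    have h1 : |W s| ≤ MW := hMW (mem_image_of_mem _ hsmem)
    have h2 : v s ≤ Mv := hMv (mem_image_of_mem _ hsmem)
    have h2' : |v s| ≤ max Mv 0 := by
      rw [abs_of_nonneg (hv0 s hs0)]; exact le_max_of_le_left h2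
    have h1' : |W s| ≤ max MW 0 := le_max_of_le_left h1
    calc ‖W s * v s‖ = |W s| * |v s| := by rw [Real.norm_eq_abs, abs_mul]
      _ ≤ max MW 0 * max Mv 0 :=
        mul_le_mul h1' h2' (abs_nonneg _) (le_max_right _ _)
  -- interval integrability of u²/v
  have hu2vInt : ∀ a b : ℝ, T < a → a ≤ b →
      IntervalIntegrable (fun s => (u s) ^ 2 / v s) volume a b := by
    intro a b ha hab
    have h1 : IntervalIntegrable (fun s => 1 / v s) volume a b :=
      h1vInt a b (hT0.trans ha) hab
    have hcont : ContinuousOn (fun s => (u s) ^ 2) (uIcc a b) := by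
      intro s hs
      rw [uIcc_of_le hab] at hs
      exact ((hucont s (lt_of_lt_of_le ha hs.1)).pow 2).continuousWithinAt
    have h2 := h1.mul_continuousOn hcont
    refine h2.congr (fun x _ => ?_)
    show 1 / v x * u x ^ 2 = u x ^ 2 / v x
    rw [mul_comm, ← div_eq_mul_one_div]
  -- Riccati integral identity
  have hFTC : ∀ a b : ℝ, T < a → a ≤ b →
      (∫ s in a..b, W s * v s) = u a - u b - ∫ s in a..b, (u s) ^ 2 / v s := by
    intro a b ha hab
    have hI1 := hWvInt a b ha hab
    have hI2 := hu2vInt a b ha hab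
    have hInt : IntervalIntegrable ueq volume a b := by
      rw [hueqdef]; exact hI1.neg.sub hI2
    have hder : ∀ t ∈ uIcc a b, HasDerivAt u (ueq t) t := by
      intro t htt
      rw [uIcc_of_le hab] at htt
      exact hud t (lt_of_lt_of_le ha htt.1)
    have hftc := intervalIntegral.integral_eq_sub_of_hasDerivAt hder hInt
    have hsplit : (∫ s in a..b, ueq s)
        = (∫ s in a..b, -(W s * v s)) - ∫ s in a..b, (u s) ^ 2 / v s := by
      rw [hueqdef]
      exact intervalIntegral.integral_sub hI1.neg hI2
    rw [intervalIntegral.integral_neg, hftc] at hsplit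
    linarith
  -- the key lemma
  have keylem : ∀ ε : ℝ, 0 < ε → ∀ᶠ t in atTop, -(1 + ε) ≤ u t * A t := by
    intro ε hε
    by_contra hfreq
    rw [Filter.not_eventually] at hfreq
    push_neg at hfreq
    set η : ℝ := ε / (1 + ε) with hηdef
    have hη0 : 0 < η := by positivity
    have hη1 : 1 - η = 1 / (1 + ε) := by
      rw [hηdef]; field_simp; ring
    have hηlt : η < 1 := by
      rw [hηdef, div_lt_one (by linarith)]; linarith
    have hδ : ∀ᶠ t in atTop, B ^ 2 * (A t) ^ 2 ≤ η * (1 + ε) ^ 2 := by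
      have h0 : Tendsto (fun t => B ^ 2 * (A t) ^ 2) atTop (nhds 0) := by
        have := (hAtend.pow 2).const_mul (B ^ 2)
        simpa using this
      exact (h0.eventually_lt_const (by positivity)).mono fun t ht => le_of_lt ht
    obtain ⟨t₁, ht₁Φ, ht₁T, ht₁δ⟩ :
        ∃ t₁, u t₁ * A t₁ < -(1 + ε) ∧ T < t₁ ∧ B ^ 2 * (A t₁) ^ 2 ≤ η * (1 + ε) ^ 2 := by
      obtain ⟨t₁, h1, h2, h3⟩ :=
        (hfreq.and_eventually ((eventually_gt_atTop T).and hδ)).exists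
      exact ⟨t₁, h1, h2, h3⟩
    have ht₁0 : (0:ℝ) < t₁ := hT0.trans ht₁T
    have hA₁pos : 0 < A t₁ := hApos t₁ ht₁0
    have hu₁neg : u t₁ < 0 := by
      by_contra h
      push_neg at h
      have := mul_nonneg h (le_of_lt hA₁pos)
      linarith
    -- the decay estimate, valid as long as u * A stays below -(1+ε)
    have L1 : ∀ s : ℝ, t₁ ≤ s → (∀ r ∈ Icc t₁ s, u r * A r ≤ -(1 + ε)) →
        -(u s)⁻¹ ≤ -(u t₁)⁻¹ - (1 - η) * (A t₁ - A s) := by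
      intro s hs hall
      have huneg : ∀ r ∈ Icc t₁ s, u r < 0 := by
        intro r hr
        have hAr : 0 < A r := hApos r (lt_of_lt_of_le ht₁0 hr.1)
        by_contra h
        push_neg at h
        have := mul_nonneg h (le_of_lt hAr)
        linarith [hall r hr]
      have hder : ∀ r ∈ uIcc t₁ s, HasDerivAt (fun x => -(u x)⁻¹)
          (ueq r * ((u r) ^ 2)⁻¹) r := by
        intro r hr
        rw [uIcc_of_le hs] at hr
        have hune : u r ≠ 0 := ne_of_lt (huneg r hr)
        have h1 := ((hud r (lt_of_lt_of_le ht₁T hr.1)).inv hune).neg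
        convert h1 using 1 <;> try rfl
        field_simp
      have hint : IntervalIntegrable (fun r => ueq r * ((u r) ^ 2)⁻¹) volume t₁ s := by
        have hIueq : IntervalIntegrable ueq volume t₁ s := by
          rw [hueqdef]
          exact (hWvInt t₁ s ht₁T hs).neg.sub (hu2vInt t₁ s ht₁T hs)
        refine hIueq.mul_continuousOn ?_
        intro r hr
        rw [uIcc_of_le hs] at hr
        have hune : u r ≠ 0 := ne_of_lt (huneg r hr)
        exact (((hucont r (lt_of_lt_of_le ht₁T hr.1)).pow 2).inv₀
          (pow_ne_zero 2 hune)).continuousWithinAt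
      have hftc := intervalIntegral.integral_eq_sub_of_hasDerivAt hder hint
      have hmono : (∫ r in t₁..s, ueq r * ((u r) ^ 2)⁻¹)
          ≤ ∫ r in t₁..s, -(1 - η) * (1 / v r) := by
        apply intervalIntegral.integral_mono_on hs hint
          ((h1vInt t₁ s ht₁0 hs).const_mul _)
        intro r hr
        have hrT : T < r := lt_of_lt_of_le ht₁T hr.1
        have hr0 : (0:ℝ) < r := hT0.trans hrT
        have hune : u r < 0 := huneg r hr
        have hAr : 0 < A r := hApos r hr0
        have hArle : A r ≤ A t₁ := hAanti t₁ r ht₁0 hr.1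
        have hu2pos : 0 < (u r) ^ 2 := by
          rw [pow_two]
          exact mul_pos_of_neg_of_neg hune hune
        rcases (hv0 r (le_of_lt hr0)).eq_or_lt with hv | hv
        · rw [hueqdef]
          simp [← hv]
        · have hWvr : -(W r * v r) ≤ B ^ 2 / v r := hvWv r hr0
          have hstep : (1 + ε) ≤ (-(u r)) * A t₁ := by
            have e3 : (1 + ε) ≤ (-(u r)) * A r := by
              have e4 : -(u r * A r) = (-(u r)) * A r := by ring
              linarith [hall r hr]
            have e5 : (-(u r)) * A r ≤ (-(u r)) * A t₁ :=
              mul_le_mul_of_nonneg_left hArle (by linarith)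
            linarith
          have hu2A : (1 + ε) ^ 2 ≤ (u r) ^ 2 * (A t₁) ^ 2 := by
            have h8 := mul_self_le_mul_self (by linarith : (0:ℝ) ≤ 1 + ε) hstep
            nlinarith [h8]
          have hB2 : B ^ 2 ≤ η * (u r) ^ 2 := by
            have h9 := mul_le_mul_of_nonneg_left hu2A (le_of_lt hη0)
            have h10 : B ^ 2 * (A t₁) ^ 2 ≤ (η * (u r) ^ 2) * (A t₁) ^ 2 := by
              nlinarith [h9]
            exact (mul_le_mul_iff_left₀ (pow_pos hA₁pos 2)).mp h10
          have hkey : ueq r ≤ (η - 1) * ((u r) ^ 2 * (1 / v r)) := by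
            rw [hueqdef]
            have h5 : B ^ 2 / v r ≤ (η * (u r) ^ 2) / v r :=
              (div_le_div_iff_of_pos_right hv).mpr hB2
            have h6 : (η - 1) * ((u r) ^ 2 * (1 / v r))
                = η * (u r) ^ 2 / v r - (u r) ^ 2 / v r := by
              field_simp
            have h7 : -(W r * v r) - (u r) ^ 2 / v r
                ≤ B ^ 2 / v r - (u r) ^ 2 / v r := by linarith
            rw [h6]
            dsimp only
            linarith
          calc ueq r * ((u r) ^ 2)⁻¹
              ≤ ((η - 1) * ((u r) ^ 2 * (1 / v r))) * ((u r) ^ 2)⁻¹ :=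
                mul_le_mul_of_nonneg_right hkey (inv_nonneg.mpr (sq_nonneg _))
            _ = (η - 1) * (1 / v r) * ((u r) ^ 2 * ((u r) ^ 2)⁻¹) := by ring
            _ = -(1 - η) * (1 / v r) := by
                rw [mul_inv_cancel₀ (ne_of_gt hu2pos)]; ring
      have hrhs : (∫ r in t₁..s, -(1 - η) * (1 / v r)) = -(1 - η) * (A t₁ - A s) := by
        rw [intervalIntegral.integral_const_mul, ← hAsub t₁ s ht₁0 hs]
      have hftc' : (∫ r in t₁..s, ueq r * ((u r) ^ 2)⁻¹) = -(u s)⁻¹ - -(u t₁)⁻¹ := hftc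
      rw [hftc', hrhs] at hmono
      linarith
    -- strict starting bound : -(u t₁)⁻¹ < (1-η) A t₁
    have ht₁h : -(u t₁)⁻¹ < (1 - η) * A t₁ := by
      have h4 : (1:ℝ) / (-(u t₁)) < A t₁ / (1 + ε) := by
        rw [div_lt_div_iff₀ (neg_pos.mpr hu₁neg) (by linarith)]
        nlinarith [ht₁Φ]
      have h5 : (1:ℝ) / (-(u t₁)) = -(u t₁)⁻¹ := by
        rw [one_div, inv_neg]
      have h6 : A t₁ / (1 + ε) = (1 - η) * A t₁ := by
        rw [hη1]; ring
      rw [h5, h6] at h4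
      exact h4
    -- propagation: u * A stays ≤ -(1+ε) on [t₁, ∞)
    have hL2 : ∀ s : ℝ, t₁ ≤ s → (∀ r ∈ Icc t₁ s, u r * A r ≤ -(1 + ε)) →
        u s * A s < -(1 + ε) := by
      intro s hs hall
      have h1 := L1 s hs hall
      have hAs : 0 < A s := hApos s (lt_of_lt_of_le ht₁0 hs)
      have hus : u s < 0 := by
        by_contra h
        push_neg at h
        have := mul_nonneg h (le_of_lt hAs)
        linarith [hall s ⟨hs, le_rfl⟩]
      have hAts : A s ≤ A t₁ := hAanti t₁ s ht₁0 hs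
      have h2 : -(u s)⁻¹ < (1 - η) * A s := by nlinarith [h1, ht₁h]
      have h3 : (1 + ε) * (-(u s)) * (-(u s)⁻¹)
          < (1 + ε) * (-(u s)) * ((1 - η) * A s) := by
        apply mul_lt_mul_of_pos_left h2
        exact mul_pos (by linarith) (neg_pos.mpr hus)
      have e1 : (1 + ε) * (-(u s)) * (-(u s)⁻¹) = 1 + ε := by
        field_simp
        rw [div_self (ne_of_lt hus)]
      have e2 : (1 + ε) * (-(u s)) * ((1 - η) * A s) = -(u s * A s) := by
        rw [hη1]
        field_simp
      rw [e1, e2] at h3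
      linarith
    -- conclude u * A ≤ -(1+ε) for ALL s ≥ t₁
    have hall : ∀ s : ℝ, t₁ ≤ s → u s * A s ≤ -(1 + ε) := by
      by_contra hbad
      push_neg at hbad
      obtain ⟨sb, hsb1, hsb2⟩ := hbad
      set E : Set ℝ := {x | t₁ ≤ x ∧ -(1 + ε) < u x * A x} with hEdef
      have hEne : E.Nonempty := ⟨sb, hsb1, hsb2⟩
      have hEbdd : BddBelow E := ⟨t₁, fun x hx => hx.1⟩
      set s₀ : ℝ := sInf E with hs₀def
      have hs₀ge : t₁ ≤ s₀ := le_csInf hEne fun x hx => hx.1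
      -- continuity of u * A on [t₁, s₀+1]
      have hΦcont : ContinuousOn (fun x => u x * A x) (Icc t₁ (s₀ + 1)) := by
        have hucOn : ContinuousOn u (Icc t₁ (s₀ + 1)) := fun r hr =>
          (hucont r (lt_of_lt_of_le ht₁T hr.1)).continuousWithinAt
        have hAcOn : ContinuousOn A (Icc t₁ (s₀ + 1)) := by
          have hprim : ContinuousOn (fun x => A t₁ - ∫ r in Ioc t₁ x, 1 / v r)
              (Icc t₁ (s₀ + 1)) := by
            refine continuousOn_const.sub ?_
            refine intervalIntegral.continuousOn_primitive ?_
            exact ((hvL1inf (t₁ / 2) (by linarith)).mono_set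
              (fun x hx => lt_of_lt_of_le (by linarith) hx.1))
          refine hprim.congr fun x hx => ?_
          have h2 := hAsub t₁ x ht₁0 hx.1
          rw [intervalIntegral.integral_of_le hx.1] at h2
          linarith
        exact hucOn.mul hAcOn
      -- sInf E satisfies both inequalities, contradiction via hL2
      have hs₀mem : -(1 + ε) ≤ u s₀ * A s₀ := by
        by_contra hlt
        push_neg at hlt
        have hc := hΦcont s₀ ⟨hs₀ge, by linarith⟩
        have hpre := hc (Iio_mem_nhds hlt)
        rw [mem_map, mem_nhdsWithin] at hpre
        obtain ⟨O, hOopen, hOs₀, hOsub⟩ := hpre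
        obtain ⟨δ, hδ0, hball⟩ := Metric.isOpen_iff.mp hOopen s₀ hOs₀
        obtain ⟨x, hxE, hxlt⟩ := exists_lt_of_csInf_lt hEne
          (show s₀ < s₀ + min δ 1 / 2 by
            have : (0:ℝ) < min δ 1 := lt_min hδ0 one_pos
            linarith)
        have hxge : s₀ ≤ x := csInf_le hEbdd hxE
        have hxO : x ∈ O := by
          apply hball
          rw [Metric.mem_ball, Real.dist_eq, abs_lt]
          have h1 : min δ 1 ≤ δ := min_le_left _ _
          constructor <;> nlinarith [lt_min hδ0 one_pos]
        have hxIcc : x ∈ Icc t₁ (s₀ + 1) := by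
          refine ⟨hs₀ge.trans hxge, ?_⟩
          have : min δ 1 ≤ 1 := min_le_right _ _
          nlinarith [lt_min hδ0 one_pos]
        have := hOsub ⟨hxO, hxIcc⟩
        rw [mem_preimage, mem_Iio] at this
        linarith [hxE.2]
      have hs₀le : u s₀ * A s₀ ≤ -(1 + ε) := by
        rcases eq_or_lt_of_le hs₀ge with h | h
        · rw [← h]; exact le_of_lt ht₁Φ
        · by_contra hgt
          push_neg at hgt
          have hc := hΦcont s₀ ⟨hs₀ge, by linarith⟩
          have hpre := hc (Ioi_mem_nhds hgt)
          rw [mem_map, mem_nhdsWithin] at hpre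
          obtain ⟨O, hOopen, hOs₀, hOsub⟩ := hpre
          obtain ⟨δ, hδ0, hball⟩ := Metric.isOpen_iff.mp hOopen s₀ hOs₀
          set r : ℝ := max t₁ (s₀ - min δ 1 / 2) with hrdef
          have hmin : (0:ℝ) < min δ 1 := lt_min hδ0 one_pos
          have hr1 : t₁ ≤ r := le_max_left _ _
          have hrlt : r < s₀ := by
            rw [hrdef]
            apply max_lt h
            linarith
          have hrO : r ∈ O := by
            apply hball
            rw [Metric.mem_ball, Real.dist_eq, abs_lt]
            have h6 : s₀ - min δ 1 / 2 ≤ r := le_max_right _ _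
            have h7 : min δ 1 ≤ δ := min_le_left _ _
            constructor <;> nlinarith
          have hrIcc : r ∈ Icc t₁ (s₀ + 1) := ⟨hr1, by linarith⟩
          have hΦr := hOsub ⟨hrO, hrIcc⟩
          rw [mem_preimage, mem_Ioi] at hΦr
          exact absurd (csInf_le hEbdd ⟨hr1, hΦr⟩) (not_le.mpr hrlt)
      have hs₀all : ∀ r ∈ Icc t₁ s₀, u r * A r ≤ -(1 + ε) := by
        intro r hr
        rcases eq_or_lt_of_le hr.2 with h | h
        · rw [h]; exact hs₀le
        · by_contra hh
          push_neg at hh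
          exact absurd (csInf_le hEbdd ⟨hr.1, hh⟩) (not_le.mpr h)
      have := hL2 s₀ hs₀ge hs₀all
      linarith
    -- final blow-up : -(u s)⁻¹ would become nonpositive
    obtain ⟨s, hs1, hs2⟩ : ∃ s : ℝ, t₁ ≤ s ∧
        (1 - η) * A s < (1 - η) * A t₁ - (-(u t₁)⁻¹) := by
      have htnd : Tendsto (fun x => (1 - η) * A x) atTop (nhds 0) := by
        have := hAtend.const_mul (1 - η)
        simpa using this
      have hpos : (0:ℝ) < (1 - η) * A t₁ - (-(u t₁)⁻¹) := by linarith
      obtain ⟨s, h1, h2⟩ :=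
        ((htnd.eventually_lt_const hpos).and (eventually_ge_atTop t₁)).exists
      exact ⟨s, h2, h1⟩
    have h1 := L1 s hs1 fun r hr => hall r hr.1
    have hAs : 0 < A s := hApos s (lt_of_lt_of_le ht₁0 hs1)
    have hus : u s < 0 := by
      by_contra h
      push_neg at h
      have := mul_nonneg h (le_of_lt hAs)
      linarith [hall s hs1]
    have husinv : 0 < -(u s)⁻¹ := by
      rw [← inv_neg]
      exact inv_pos.mpr (neg_pos.mpr hus)
    nlinarith [h1, hs2, husinv]
  -- eventual bound on the limsup quantity
  have hev : ∀ ε : ℝ, 0 < ε → ∀ᶠ t in atTop, (∫ s in R..t, W s * v s) * A t ≤ 1 + ε := by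
    intro ε hε
    have ht₀T : T < max T R + 1 := lt_of_le_of_lt (le_max_left _ _) (lt_add_one _)
    have ht₀R : R ≤ max T R + 1 := (le_max_right T R).trans (le_of_lt (lt_add_one _))
    have ht₀0 : (0:ℝ) < max T R + 1 := hT0.trans ht₀T
    by_cases hC : IntervalIntegrable (fun s => W s * v s) volume R (max T R + 1)
    · have hkey := keylem (ε / 2) (by linarith)
      have htend : Tendsto
          (fun t => ((∫ s in R..(max T R + 1), W s * v s) + u (max T R + 1)) * A t)
          atTop (nhds 0) := by
        have := hAtend.const_mul ((∫ s in R..(max T R + 1), W s * v s) + u (max T R + 1))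
        simpa using this
      have hsmall := htend.eventually_lt_const (show (0:ℝ) < ε / 2 by linarith)
      filter_upwards [hkey, hsmall, eventually_ge_atTop (max T R + 1)] with t h1 h2 h3
      have hsplit : (∫ s in R..t, W s * v s)
          = (∫ s in R..(max T R + 1), W s * v s) + ∫ s in (max T R + 1)..t, W s * v s :=
        (intervalIntegral.integral_add_adjacent_intervals hC
          (hWvInt (max T R + 1) t ht₀T h3)).symm
      have hftc := hFTC (max T R + 1) t ht₀T h3
      have hQnn : 0 ≤ ∫ s in (max T R + 1)..t, (u s) ^ 2 / v s :=
        intervalIntegral.integral_nonneg h3 fun s hs =>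
          div_nonneg (sq_nonneg _) (hv0 s (le_of_lt (ht₀0.trans_le hs.1)))
      have hAt : 0 ≤ A t := hAnn t (le_of_lt (ht₀0.trans_le h3))
      rw [hsplit, hftc]
      nlinarith [mul_nonneg hQnn hAt, h1, h2]
    · filter_upwards [eventually_ge_atTop (max T R + 1)] with t ht
      have hni : ¬ IntervalIntegrable (fun s => W s * v s) volume R t := by
        intro h
        refine hC (h.mono_set ?_)
        rw [uIcc_of_le ht₀R, uIcc_of_le (ht₀R.trans ht)]
        exact Icc_subset_Icc le_rfl ht
      rw [intervalIntegral.integral_undef hni, zero_mul]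
      linarith
  -- conclusion
  set L : ℝ := Filter.limsup (fun t => (∫ s in R..t, W s * v s) * A t) atTop with hLdef
  have hL1 : L ≤ 1 + (L - 1) / 2 :=
    limsup_le_helper14 (by linarith) (hev ((L - 1) / 2) (by linarith))
  linarith
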